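/- For every N ≥ 3 and every λ > 0, there do not exist positive couplings J_1, …, J_{N−1} > 0 such that the single-excitation Hamiltonian h of the field-free Heisenberg chain of length N has characteristic polynomial ∏_{k=0}^{N−1} (X + k·λ), i.e., such that h has the linear spectrum {0, −λ, −2λ, …, −(N−1)λ}. -/

import Mathlib

open Polynomial Matrix

/-- The single-excitation Hamiltonian of the field-free Heisenberg chain of length `N`
with couplings `J 1, …, J (N-1)` (and the convention `J 0 = J N = 0`). -/
def heisHam (N : ℕ) (J : ℕ → ℝ) : Matrix (Fin N) (Fin N) ℝ :=
  Matrix.of fun i j =>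
    if (i : ℕ) + 1 = (j : ℕ) then J ((i : ℕ) + 1)
    else if (j : ℕ) + 1 = (i : ℕ) then J ((j : ℕ) + 1)
    else if i = j then -(J (i : ℕ) + J ((i : ℕ) + 1))
    else 0

section Generic

variable {n : Type*} [Fintype n] [DecidableEq n]

lemma mconj_pow (V M W : Matrix n n ℝ) (hVW : V * W = 1) (hWV : W * V = 1) (t : ℕ) :
    (V * M * W) ^ t = V * M ^ t * W := by
  induction t with
  | zero => simp [hVW]
  | succ k ih =>
    rw [pow_succ, pow_succ, ih]
    simp only [Matrix.mul_assoc]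
    rw [← Matrix.mul_assoc W V, hWV, Matrix.one_mul]

lemma aeval_conj (V M W : Matrix n n ℝ) (hVW : V * W = 1) (hWV : W * V = 1)
    (p : ℝ[X]) : aeval (V * M * W) p = V * aeval M p * W := by
  rw [Polynomial.aeval_eq_sum_range, Polynomial.aeval_eq_sum_range]
  rw [Finset.mul_sum, Finset.sum_mul]
  refine Finset.sum_congr rfl fun t _ => ?_
  rw [Matrix.mul_smul, Matrix.smul_mul, mconj_pow V M W hVW hWV]

lemma diagonal_pow' (d : n → ℝ) (t : ℕ) :
    (Matrix.diagonal d) ^ t = Matrix.diagonal (fun i => d i ^ t) := by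
  induction t with
  | zero => simp
  | succ k ih => rw [pow_succ, ih, Matrix.diagonal_mul_diagonal]; simp [pow_succ]

lemma aeval_diagonal (d : n → ℝ) (p : ℝ[X]) :
    aeval (Matrix.diagonal d) p = Matrix.diagonal (fun i => p.eval (d i)) := by
  rw [Polynomial.aeval_eq_sum_range]
  ext i j
  rw [Matrix.sum_apply]
  simp_rw [Matrix.smul_apply, diagonal_pow', Matrix.diagonal_apply]
  by_cases h : i = j
  · subst h
    simp only [if_pos rfl]
    rw [Polynomial.eval_eq_sum_range]
    simp [smul_eq_mul]
  · simp [h]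

lemma charpoly_conj' (V D W : Matrix n n ℝ) (hVW : V * W = 1) :
    (V * D * W).charpoly = D.charpoly := by
  unfold Matrix.charpoly charmatrix
  have h1 : (C : ℝ →+* ℝ[X]).mapMatrix (V * D * W)
      = C.mapMatrix V * C.mapMatrix D * C.mapMatrix W := by
    simp [_root_.map_mul]
  have hVW' : (C : ℝ →+* ℝ[X]).mapMatrix V * C.mapMatrix W = 1 := by
    rw [← _root_.map_mul, hVW, _root_.map_one]
  have key : Matrix.scalar n (X : ℝ[X]) - C.mapMatrix (V * D * W)
      = C.mapMatrix V * (Matrix.scalar n (X : ℝ[X]) - C.mapMatrix D) * C.mapMatrix W := by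
    rw [h1, Matrix.mul_sub, Matrix.sub_mul]
    congr 1
    rw [Matrix.mul_assoc, (Matrix.scalar_commute (X : ℝ[X]) (fun r => Commute.all _ _)
      (C.mapMatrix W)).eq, ← Matrix.mul_assoc, hVW', Matrix.one_mul]
  have hWV' : (C : ℝ →+* ℝ[X]).mapMatrix W * C.mapMatrix V = 1 := by
    rw [← _root_.map_mul, mul_eq_one_comm.mp hVW, _root_.map_one]
  rw [key, Matrix.det_mul, Matrix.det_mul, mul_comm, ← mul_assoc, ← Matrix.det_mul, hWV']
  simp

lemma charpoly_diagonal (d : n → ℝ) :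
    (Matrix.diagonal d).charpoly = ∏ i, (X - C (d i)) := by
  unfold Matrix.charpoly charmatrix
  have : Matrix.scalar n (X : ℝ[X]) - (C : ℝ →+* ℝ[X]).mapMatrix (Matrix.diagonal d)
      = Matrix.diagonal (fun i => X - C (d i)) := by
    ext i j
    by_cases h : i = j
    · subst h; simp [Matrix.scalar, Matrix.diagonal_apply]
    · simp [Matrix.scalar, Matrix.diagonal_apply, h, Matrix.one_apply]
  rw [this, Matrix.det_diagonal]

lemma herm_decomp {A : Matrix n n ℝ} (hA : A.IsHermitian) :
    ∃ V W : Matrix n n ℝ, V * W = 1 ∧ W * V = 1 ∧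
      A = V * Matrix.diagonal hA.eigenvalues * W := by
  refine ⟨hA.eigenvectorUnitary, star (hA.eigenvectorUnitary : Matrix n n ℝ), ?_, ?_, ?_⟩
  · exact Matrix.mem_unitaryGroup_iff.mp hA.eigenvectorUnitary.2
  · exact Matrix.mem_unitaryGroup_iff'.mp hA.eigenvectorUnitary.2
  · have := hA.spectral_theorem
    rwa [RCLike.ofReal_real_eq_id, Function.id_comp] at this

lemma herm_charpoly {A : Matrix n n ℝ} (hA : A.IsHermitian) :
    A.charpoly = ∏ i, (X - C (hA.eigenvalues i)) := by
  obtain ⟨V, W, hVW, hWV, hdec⟩ := herm_decomp hA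
  conv_lhs => rw [hdec]
  rw [charpoly_conj' V _ W hVW, _root_.charpoly_diagonal]

lemma herm_trace_aeval {A : Matrix n n ℝ} (hA : A.IsHermitian) (p : ℝ[X]) :
    (aeval A p).trace = ∑ i, p.eval (hA.eigenvalues i) := by
  obtain ⟨V, W, hVW, hWV, hdec⟩ := herm_decomp hA
  conv_lhs => rw [hdec]
  rw [aeval_conj V _ W hVW hWV, aeval_diagonal]
  rw [Matrix.trace_mul_cycle, hWV, Matrix.one_mul, Matrix.trace_diagonal]

lemma aeval_transpose (M : Matrix n n ℝ) (p : ℝ[X]) : (aeval M p)ᵀ = aeval Mᵀ p := by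
  rw [Polynomial.aeval_eq_sum_range, Polynomial.aeval_eq_sum_range, Matrix.transpose_sum]
  refine Finset.sum_congr rfl fun t _ => ?_
  rw [Matrix.transpose_smul, Matrix.transpose_pow]

end Generic

variable {N : ℕ} {J : ℕ → ℝ}

lemma heis_apply (i j : Fin N) : heisHam N J i j =
    if (i : ℕ) + 1 = (j : ℕ) then J ((i : ℕ) + 1)
    else if (j : ℕ) + 1 = (i : ℕ) then J ((j : ℕ) + 1)
    else if i = j then -(J (i : ℕ) + J ((i : ℕ) + 1))
    else 0 := rfl

lemma heis_apply_far (i j : Fin N) (h1 : (i:ℕ) + 1 ≠ j) (h2 : (j:ℕ) + 1 ≠ i) (h3 : (i:ℕ) ≠ j) :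
    heisHam N J i j = 0 := by
  rw [heis_apply, if_neg h1, if_neg h2, if_neg (by simp [Fin.ext_iff]; omega)]

lemma heis_herm : (heisHam N J).IsHermitian := by
  ext i j
  simp only [Matrix.conjTranspose_apply, star_trivial]
  rw [heis_apply, heis_apply]
  by_cases hij : (i : ℕ) + 1 = (j : ℕ)
  · rw [if_neg (by omega), if_pos hij, if_pos hij]
  · by_cases hji : (j : ℕ) + 1 = (i : ℕ)
    · rw [if_pos hji, if_neg hij, if_pos hji]
    · by_cases heq : i = j
      · subst heq; simp
      · rw [if_neg hji, if_neg hij, if_neg hij, if_neg hji,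
          if_neg (Ne.symm heq), if_neg heq]

lemma heis_pow_far : ∀ (t : ℕ) (i j : Fin N), (i:ℕ) + t < (j:ℕ) →
    ((heisHam N J) ^ t) i j = 0 := by
  intro t
  induction t with
  | zero =>
    intro i j h
    rw [pow_zero, Matrix.one_apply_ne (by simp [Fin.ext_iff]; omega)]
  | succ k ih =>
    intro i j h
    rw [pow_succ, Matrix.mul_apply]
    refine Finset.sum_eq_zero fun x _ => ?_
    by_cases hx : (i:ℕ) + k < (x:ℕ)
    · rw [ih i x hx, zero_mul]
    · rw [heis_apply_far x j (by omega) (by omega) (by omega), mul_zero]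

lemma heis_pow_corner : ∀ (t : ℕ) (i j : Fin N), (j:ℕ) = (i:ℕ) + t →
    ((heisHam N J) ^ t) i j = ∏ n ∈ Finset.Icc ((i:ℕ)+1) (j:ℕ), J n := by
  intro t
  induction t with
  | zero =>
    intro i j h
    have : i = j := Fin.ext (by omega)
    subst this
    rw [pow_zero, Matrix.one_apply_eq]
    rw [show Finset.Icc ((i:ℕ)+1) (i:ℕ) = ∅ by
      apply Finset.Icc_eq_empty; omega]
    simp
  | succ k ih =>
    intro i j h
    have hx0 : (i:ℕ) + k < N := by omega
    set x0 : Fin N := ⟨(i:ℕ) + k, hx0⟩ with hx0def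
    rw [pow_succ, Matrix.mul_apply]
    rw [Finset.sum_eq_single x0]
    · rw [ih i x0 rfl]
      have : heisHam N J x0 j = J ((j:ℕ)) := by
        rw [heis_apply, if_pos (by simp [hx0def]; omega)]
        congr 1
        simp [hx0def]; omega
      rw [this]
      have : (x0 : ℕ) = (i:ℕ) + k := rfl
      rw [show ((x0:ℕ)) = (i:ℕ)+k from rfl]
      rw [h, show (i:ℕ) + (k+1) = ((i:ℕ) + k) + 1 by ring]
      rw [Finset.prod_Icc_succ_top (by omega)]
    · intro x _ hxne
      by_cases hx : (i:ℕ) + k < (x:ℕ)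
      · rw [heis_pow_far k i x hx, zero_mul]
      · have : (x:ℕ) < (i:ℕ) + k := by
          rcases Nat.lt_or_ge (x:ℕ) ((i:ℕ)+k) with h' | h'
          · exact h'
          · exfalso; apply hxne; apply Fin.ext
            show (x:ℕ) = (i:ℕ)+k
            omega
        rw [heis_apply_far x j (by omega) (by omega) (by omega), mul_zero]
    · intro hmem
      exact absurd (Finset.mem_univ x0) hmem

lemma heis_aeval_corner (s : Finset ℕ) (c : ℕ → ℝ) (i j : Fin N)
    (hj : (j:ℕ) = (i:ℕ) + s.card) :
    (aeval (heisHam N J) (∏ k ∈ s, (X + C (c k)))) i j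
      = ∏ n ∈ Finset.Icc ((i:ℕ)+1) (j:ℕ), J n := by
  set q : ℝ[X] := ∏ k ∈ s, (X + C (c k)) with hq
  have hmon : q.Monic := Polynomial.monic_prod_of_monic _ _ fun k _ => monic_X_add_C _
  have hdeg : q.natDegree = s.card := by
    rw [hq, Polynomial.natDegree_prod_of_monic _ _ fun k _ => monic_X_add_C _]
    simp [Polynomial.natDegree_X_add_C]
  rw [Polynomial.aeval_eq_sum_range, Matrix.sum_apply]
  simp_rw [Matrix.smul_apply]
  rw [Finset.sum_eq_single q.natDegree]
  · rw [hmon.coeff_natDegree, one_smul, hdeg, heis_pow_corner s.card i j (by omega)]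
  · intro t ht htne
    have ht' : t < q.natDegree := by
      rcases Finset.mem_range.mp ht with h
      omega
    rw [heis_pow_far t i j (by omega), smul_zero]
  · intro hmem
    exact absurd (Finset.mem_range.mpr (by omega)) hmem

lemma sum_ite_coe (m : ℕ) (v : ℝ) (hm : m < N) :
    (∑ j : Fin N, if m = (j:ℕ) then v else 0) = v := by
  have : ∀ j : Fin N, (if m = (j:ℕ) then v else 0) = (if j = (⟨m, hm⟩ : Fin N) then v else 0) := by
    intro j
    refine if_congr ?_ rfl rfl
    constructor
    · intro h; apply Fin.ext; show (j:ℕ) = m; omega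
    · intro h; subst h; rfl
  rw [Finset.sum_congr rfl fun j _ => this j]
  simp

lemma sum_ite_coe_zero (m : ℕ) (v : ℝ) (hm : ¬ m < N) :
    (∑ j : Fin N, if m = (j:ℕ) then v else 0) = 0 := by
  refine Finset.sum_eq_zero fun j _ => ?_
  rw [if_neg]
  have := j.isLt
  omega

lemma heis_row_sum (hJ0 : J 0 = 0) (hJN : J N = 0) (i : Fin N) :
    ∑ j, heisHam N J i j = 0 := by
  have hsplit : ∀ j : Fin N, heisHam N J i j =
      (if (i:ℕ) + 1 = (j:ℕ) then J ((i:ℕ)+1) else 0)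
      + (if (j:ℕ) + 1 = (i:ℕ) then J ((i:ℕ)-1+1) else 0)
      + (if i = j then -(J (i:ℕ) + J ((i:ℕ)+1)) else 0) := by
    intro j
    rw [heis_apply]
    by_cases h1 : (i:ℕ) + 1 = (j:ℕ)
    · rw [if_pos h1, if_pos h1, if_neg (by omega), if_neg (by simp [Fin.ext_iff]; omega)]
      ring
    · rw [if_neg h1, if_neg h1]
      by_cases h2 : (j:ℕ) + 1 = (i:ℕ)
      · rw [if_pos h2, if_pos h2, if_neg (by simp [Fin.ext_iff]; omega)]
        have : (j:ℕ) = (i:ℕ) - 1 := by omega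
        rw [this]; ring
      · rw [if_neg h2, if_neg h2]
        by_cases h3 : i = j
        · rw [if_pos h3]; ring
        · rw [if_neg h3]; ring
  rw [Finset.sum_congr rfl fun j _ => hsplit j]
  rw [Finset.sum_add_distrib, Finset.sum_add_distrib]
  have S3 : (∑ j : Fin N, if i = j then -(J (i:ℕ) + J ((i:ℕ)+1)) else 0)
      = -(J (i:ℕ) + J ((i:ℕ)+1)) := by simp
  have S1 : (∑ j : Fin N, if (i:ℕ) + 1 = (j:ℕ) then J ((i:ℕ)+1) else 0) = J ((i:ℕ)+1) := by
    by_cases h : (i:ℕ) + 1 < N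
    · exact sum_ite_coe _ _ h
    · rw [sum_ite_coe_zero _ _ h]
      have : (i:ℕ) + 1 = N := by have := i.isLt; omega
      rw [this, hJN]
  have S2 : (∑ j : Fin N, if (j:ℕ) + 1 = (i:ℕ) then J ((i:ℕ)-1+1) else 0) = J (i:ℕ) := by
    have hrw : ∀ j : Fin N, (if (j:ℕ) + 1 = (i:ℕ) then J ((i:ℕ)-1+1) else 0)
        = (if (i:ℕ) - 1 = (j:ℕ) ∧ 1 ≤ (i:ℕ) then J ((i:ℕ)-1+1) else 0) := by
      intro j
      refine if_congr ?_ rfl rfl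
      omega
    rw [Finset.sum_congr rfl fun j _ => hrw j]
    by_cases hi : 1 ≤ (i:ℕ)
    · simp only [hi, and_true]
      have h' : (i:ℕ) - 1 < N := by have := i.isLt; omega
      rw [sum_ite_coe _ _ h']
      congr 1
      omega
    · simp only [hi, and_false, if_false]
      have : (i:ℕ) = 0 := by omega
      rw [Finset.sum_const_zero, this, hJ0]
  rw [S1, S2, S3]
  ring

lemma proj_corner_bound (a b c : ℝ) (h1 : c^2 ≤ a*b) (h2 : 0 ≤ a) (h3 : 0 ≤ b)
    (h4 : a + b ≤ 1) : c^2 ≤ 1/4 := by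
  nlinarith [sq_nonneg (a-b)]

lemma final_ineq (x : ℝ) (hx : 3 ≤ x) : ¬ ((-((x-1)/x))^2 ≤ 1/4) := by
  intro h
  have hx0 : 0 < x := by linarith
  rw [neg_sq, div_pow, div_le_iff₀ (by positivity)] at h
  nlinarith

/-- Lemma 5 of the paper: no field-free Heisenberg chain of length `N ≥ 3` has the linear
spectrum `{0, -λ, -2λ, …, -(N-1)λ}`. -/
theorem no_linear_spectrum (N : ℕ) (hN : 3 ≤ N) (lam : ℝ) (hlam : 0 < lam) :
    ¬ ∃ J : ℕ → ℝ, (∀ n, 1 ≤ n → n ≤ N - 1 → 0 < J n) ∧ J 0 = 0 ∧ J N = 0 ∧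
      (heisHam N J).charpoly = ∏ k ∈ Finset.range N, (X + C ((k : ℝ) * lam)) := by
  rintro ⟨J, hJpos, hJ0, hJN, hchar⟩
  set A := heisHam N J with hAdef
  have hA : A.IsHermitian := heis_herm
  set eig := hA.eigenvalues with heig
  -- multiset of eigenvalues
  have hms : Multiset.map eig Finset.univ.val
      = Multiset.map (fun k : ℕ => -((k:ℝ)*lam)) (Finset.range N).val := by
    have h1 : ∏ i, (X - C (eig i)) = ∏ k ∈ Finset.range N, (X - C (-((k:ℝ) * lam))) := by
      rw [← herm_charpoly hA, hchar]
      exact Finset.prod_congr rfl fun k _ => by rw [map_neg, sub_neg_eq_add]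
    have h2 := congrArg (fun pp : ℝ[X] => pp.roots) h1
    simp only [Finset.prod_eq_multiset_prod] at h2
    rw [show Multiset.map (fun i => X - C (eig i)) Finset.univ.val
        = Multiset.map (fun a => (X:ℝ[X]) - C a) (Multiset.map eig Finset.univ.val) by
          rw [Multiset.map_map]; rfl] at h2
    rw [show Multiset.map (fun k : ℕ => (X:ℝ[X]) - C (-((k:ℝ) * lam))) (Finset.range N).val
        = Multiset.map (fun a : ℝ => (X:ℝ[X]) - C a)
            (Multiset.map (fun k : ℕ => -((k:ℝ)*lam)) (Finset.range N).val) by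
          rw [Multiset.map_map]; rfl] at h2
    simpa only [Polynomial.roots_multiset_prod_X_sub_C] using h2
  -- trace formula
  have htr : ∀ p : ℝ[X], (aeval A p).trace = ∑ k ∈ Finset.range N, p.eval (-((k:ℝ)*lam)) := by
    intro p
    rw [herm_trace_aeval hA p]
    have lhs : ∑ i, p.eval (eig i) = (Multiset.map p.eval (Multiset.map eig Finset.univ.val)).sum := by
      rw [Multiset.map_map]
      rfl
    have rhs : ∑ k ∈ Finset.range N, p.eval (-((k:ℝ)*lam))
        = (Multiset.map p.eval (Multiset.map (fun k : ℕ => -((k:ℝ)*lam)) (Finset.range N).val)).sum := by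
      rw [Multiset.map_map]
      rfl
    rw [lhs, hms, rhs]
  -- setup polynomials
  classical
  set s1 : Finset ℕ := (Finset.range N).erase 1 with hs1
  set s0 : Finset ℕ := (Finset.range N).erase 0 with hs0
  set q1 : ℝ[X] := ∏ k ∈ s1, (X + C ((k:ℝ)*lam)) with hq1
  set q0 : ℝ[X] := ∏ k ∈ s0, (X + C ((k:ℝ)*lam)) with hq0
  set B : Matrix (Fin N) (Fin N) ℝ := aeval A q1 with hB
  set B0 : Matrix (Fin N) (Fin N) ℝ := aeval A q0 with hB0
  have h1mem : (1:ℕ) ∈ Finset.range N := Finset.mem_range.mpr (by omega)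
  have h0mem : (0:ℕ) ∈ Finset.range N := Finset.mem_range.mpr (by omega)
  -- Cayley-Hamilton consequences
  have hCH : aeval A A.charpoly = 0 := Matrix.aeval_self_charpoly A
  have hkill : (A + lam • 1) * B = 0 := by
    have hsplit : A.charpoly = (X + C ((1:ℝ)*lam)) * q1 := by
      rw [hchar, hq1, ← Finset.mul_prod_erase _ _ h1mem]
      norm_num
      exact Or.inl rfl
    rw [hsplit, _root_.map_mul] at hCH
    have : aeval A (X + C ((1:ℝ)*lam)) = A + lam • 1 := by
      rw [map_add, Polynomial.aeval_X, Polynomial.aeval_C, one_mul,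
        Algebra.algebraMap_eq_smul_one]
    rwa [this] at hCH
  have hkill0 : A * B0 = 0 := by
    have hsplit : A.charpoly = (X + C ((0:ℝ)*lam)) * q0 := by
      rw [hchar, hq0, ← Finset.mul_prod_erase _ _ h0mem]
      norm_num
      rfl
    have hCH' := hCH
    rw [hsplit, _root_.map_mul] at hCH'
    have : aeval A (X + C ((0:ℝ)*lam)) = A := by
      rw [map_add, Polynomial.aeval_X, Polynomial.aeval_C, zero_mul, map_zero, add_zero]
    rwa [this] at hCH'
  have hshift : ∀ c : ℝ, (A + c • 1) * B = (c - lam) • B := by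
    intro c
    have : A + c • 1 = (A + lam • 1) + (c - lam) • 1 := by
      rw [add_assoc, ← add_smul]
      ring_nf
    rw [this, Matrix.add_mul, hkill, zero_add, Matrix.smul_mul, Matrix.one_mul]
  have hshift0 : ∀ c : ℝ, (A + c • 1) * B0 = c • B0 := by
    intro c
    rw [Matrix.add_mul, hkill0, zero_add, Matrix.smul_mul, Matrix.one_mul]
  have haevalXC : ∀ c : ℝ, aeval A (X + C c) = A + c • 1 := by
    intro c
    rw [map_add, Polynomial.aeval_X, Polynomial.aeval_C, Algebra.algebraMap_eq_smul_one]
  have hprodmul : ∀ s' : Finset ℕ,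
      aeval A ((∏ k ∈ s', (X + C ((k:ℝ)*lam))) * q1) = (∏ k ∈ s', ((k:ℝ)*lam - lam)) • B := by
    intro s'
    induction s' using Finset.induction with
    | empty => simp [hB]
    | @insert a s'' ha ih =>
      rw [Finset.prod_insert ha, Finset.prod_insert ha, mul_assoc, _root_.map_mul, haevalXC, ih,
        Matrix.mul_smul, hshift, smul_smul, mul_comm]
  have hprodmul0 : ∀ s' : Finset ℕ,
      aeval A ((∏ k ∈ s', (X + C ((k:ℝ)*lam))) * q0) = (∏ k ∈ s', ((k:ℝ)*lam)) • B0 := by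
    intro s'
    induction s' using Finset.induction with
    | empty => simp [hB0]
    | @insert a s'' ha ih =>
      rw [Finset.prod_insert ha, Finset.prod_insert ha, mul_assoc, _root_.map_mul, haevalXC, ih,
        Matrix.mul_smul, hshift0, smul_smul, mul_comm]
  set D : ℝ := ∏ k ∈ s1, ((k:ℝ)*lam - lam) with hD
  set D0 : ℝ := ∏ k ∈ s0, ((k:ℝ)*lam) with hD0
  have hB2 : B * B = D • B := by
    have h := hprodmul s1
    rw [← hq1] at h
    calc B * B = aeval A (q1 * q1) := by rw [hB, _root_.map_mul]
      _ = D • B := h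
  have hB02 : B0 * B0 = D0 • B0 := by
    have h := hprodmul0 s0
    rw [← hq0] at h
    calc B0 * B0 = aeval A (q0 * q0) := by rw [hB0, _root_.map_mul]
      _ = D0 • B0 := h
  -- symmetry
  have hAsymm : Aᵀ = A := by
    ext i j
    rw [Matrix.transpose_apply]
    simpa using (hA.apply j i).symm
  have hBsym : Bᵀ = B := by rw [hB, aeval_transpose, hAsymm]
  have hB0sym : B0ᵀ = B0 := by rw [hB0, aeval_transpose, hAsymm]
  -- corners
  have hcard1 : s1.card = N - 1 := by rw [hs1, Finset.card_erase_of_mem h1mem, Finset.card_range]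
  have hcard0 : s0.card = N - 1 := by rw [hs0, Finset.card_erase_of_mem h0mem, Finset.card_range]
  have hi0lt : 0 < N := by omega
  have hiNlt : N - 1 < N := by omega
  set i0 : Fin N := ⟨0, hi0lt⟩ with hi0
  set iN : Fin N := ⟨N-1, hiNlt⟩ with hiN
  have hi0N : i0 ≠ iN := by
    rw [hi0, hiN]
    intro h
    have := congrArg Fin.val h
    simp at this
    omega
  set PJ : ℝ := ∏ n ∈ Finset.Icc 1 (N-1), J n with hPJ
  have hIcc : Finset.Icc ((i0:ℕ)+1) ((iN:ℕ)) = Finset.Icc 1 (N-1) := rfl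
  have hBc : B i0 iN = PJ := by
    rw [hB, hq1, heis_aeval_corner s1 (fun k => (k:ℝ)*lam) i0 iN (by rw [hcard1]; show N - 1 = 0 + (N-1); omega), hIcc, hPJ]
  have hB0c : B0 i0 iN = PJ := by
    rw [hB0, hq0, heis_aeval_corner s0 (fun k => (k:ℝ)*lam) i0 iN (by rw [hcard0]; show N - 1 = 0 + (N-1); omega), hIcc, hPJ]
  -- nonvanishing of D, D0
  have hDne : D ≠ 0 := by
    rw [hD]
    refine Finset.prod_ne_zero_iff.mpr fun k hk => ?_
    have hk1 : k ≠ 1 := Finset.ne_of_mem_erase hk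
    intro h
    have : ((k:ℝ) - 1) * lam = 0 := by ring_nf; ring_nf at h; linarith
    rcases mul_eq_zero.mp this with h' | h'
    · have : (k:ℝ) = 1 := by linarith
      exact hk1 (by exact_mod_cast this)
    · exact absurd h' (ne_of_gt hlam)
  have hD0ne : D0 ≠ 0 := by
    rw [hD0]
    refine Finset.prod_ne_zero_iff.mpr fun k hk => ?_
    have hk0 : k ≠ 0 := Finset.ne_of_mem_erase hk
    positivity
  -- traces
  have heval1 : ∀ (k : ℕ) (sS : Finset ℕ), Polynomial.eval (-((k:ℝ)*lam)) (∏ k' ∈ sS, (X + C ((k':ℝ)*lam)))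
      = ∏ k' ∈ sS, (((k':ℝ)) * lam - (k:ℝ)*lam) := by
    intro k sS
    rw [Polynomial.eval_prod]
    exact Finset.prod_congr rfl fun k' _ => by
      rw [Polynomial.eval_add, Polynomial.eval_X, Polynomial.eval_C]; ring
  have htrB : B.trace = D := by
    rw [hB, htr q1, ← Finset.add_sum_erase _ _ h1mem, ← hs1]
    have hz : ∑ k ∈ s1, Polynomial.eval (-((k:ℝ)*lam)) q1 = 0 := by
      refine Finset.sum_eq_zero fun k hk => ?_
      rw [hq1, heval1]
      exact Finset.prod_eq_zero hk (by ring)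
    rw [hz, add_zero, hq1, heval1, hD]
    exact Finset.prod_congr rfl fun k' _ => by push_cast; ring
  have htrB0 : B0.trace = D0 := by
    rw [hB0, htr q0, ← Finset.add_sum_erase _ _ h0mem, ← hs0]
    have hz : ∑ k ∈ s0, Polynomial.eval (-((k:ℝ)*lam)) q0 = 0 := by
      refine Finset.sum_eq_zero fun k hk => ?_
      rw [hq0, heval1]
      exact Finset.prod_eq_zero hk (by ring)
    rw [hz, add_zero, hq0, heval1, hD0]
    exact Finset.prod_congr rfl fun k' _ => by push_cast; ring
  -- all-ones vector
  set ones : Fin N → ℝ := fun _ => (1:ℝ) with hones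
  have hAones : A *ᵥ ones = 0 := by
    funext i
    have : (A *ᵥ ones) i = ∑ j, A i j := by
      simp [Matrix.mulVec, dotProduct, hones]
    rw [this, heis_row_sum hJ0 hJN i]
    rfl
  have hprodones : ∀ s' : Finset ℕ,
      (aeval A (∏ k ∈ s', (X + C ((k:ℝ)*lam)))) *ᵥ ones = (∏ k ∈ s', ((k:ℝ)*lam)) • ones := by
    intro s'
    induction s' using Finset.induction with
    | empty => simp [Matrix.one_mulVec]
    | @insert a s'' ha ih =>
      rw [Finset.prod_insert ha, Finset.prod_insert ha, _root_.map_mul, haevalXC,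
        ← Matrix.mulVec_mulVec, ih, Matrix.mulVec_smul, Matrix.add_mulVec, hAones,
        Matrix.smul_mulVec, Matrix.one_mulVec, zero_add, smul_smul]
      congr 1
      ring
  have hB0ones : B0 *ᵥ ones = D0 • ones := by
    have h := hprodones s0
    rw [← hq0, ← hB0, ← hD0] at h
    exact h
  -- the all-ones matrix
  set E : Matrix (Fin N) (Fin N) ℝ := Matrix.of (fun _ _ => (1:ℝ)) with hE
  have hEsym : Eᵀ = E := rfl
  have hB0E : B0 * E = D0 • E := by
    ext i j
    rw [Matrix.mul_apply]
    have h := congrFun hB0ones i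
    simp only [Matrix.mulVec, dotProduct, hones, mul_one, Pi.smul_apply,
      smul_eq_mul] at h
    simpa [hE] using h
  have hEB0 : E * B0 = D0 • E := by
    have h := congrArg Matrix.transpose hB0E
    rwa [Matrix.transpose_mul, hB0sym, hEsym, Matrix.transpose_smul, hEsym] at h
  have hEE : E * E = (N:ℝ) • E := by
    ext i j
    rw [Matrix.mul_apply]
    simp [hE]
  have htrE : E.trace = (N:ℝ) := by
    simp [Matrix.trace, Matrix.diag, hE]
  have hNne : (N:ℝ) ≠ 0 := by positivity
  set Q : Matrix (Fin N) (Fin N) ℝ := D0⁻¹ • B0 - (N:ℝ)⁻¹ • E with hQ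
  have hQ2 : Q * Q = Q := by
    rw [hQ]
    simp only [Matrix.sub_mul, Matrix.mul_sub, Matrix.smul_mul, Matrix.mul_smul, hB02, hB0E,
      hEB0, hEE, smul_smul]
    match_scalars <;> field_simp <;> ring
  have hQsym : Qᵀ = Q := by
    rw [hQ, Matrix.transpose_sub, Matrix.transpose_smul, Matrix.transpose_smul, hB0sym, hEsym]
  have htrQ : Q.trace = 0 := by
    rw [hQ, Matrix.trace_sub, Matrix.trace_smul, Matrix.trace_smul, htrB0, htrE,
      smul_eq_mul, smul_eq_mul, inv_mul_cancel₀ hD0ne, inv_mul_cancel₀ hNne, sub_self]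
  have hQzero : Q i0 iN = 0 := by
    have hQs : ∀ i j, Q j i = Q i j := by
      intro i j
      conv_lhs => rw [← hQsym]
      rfl
    have h0 : ∑ i, ∑ x, (Q i x)^2 = 0 := by
      have h1 : (Q * Q).trace = Q.trace := by rw [hQ2]
      rw [htrQ] at h1
      rw [← h1, Matrix.trace]
      refine Finset.sum_congr rfl fun i _ => ?_
      rw [Matrix.diag_apply, Matrix.mul_apply]
      refine Finset.sum_congr rfl fun x _ => ?_
      rw [hQs i x, sq]
    have h2 : ∀ i ∈ (Finset.univ : Finset (Fin N)), (0:ℝ) ≤ ∑ x, (Q i x)^2 := by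
      intro i _
      positivity
    have h3 := (Finset.sum_eq_zero_iff_of_nonneg h2).mp h0 i0 (Finset.mem_univ i0)
    have h4 : ∀ x ∈ (Finset.univ : Finset (Fin N)), (0:ℝ) ≤ (Q i0 x)^2 := fun x _ => sq_nonneg _
    have h5 := (Finset.sum_eq_zero_iff_of_nonneg h4).mp h3 iN (Finset.mem_univ iN)
    exact pow_eq_zero_iff (two_ne_zero) |>.mp h5
  have hPJval : PJ = D0 / N := by
    have h := hQzero
    rw [hQ, Matrix.sub_apply, Matrix.smul_apply, Matrix.smul_apply, hB0c] at h
    have hEc : E i0 iN = 1 := rfl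
    rw [hEc, smul_eq_mul, smul_eq_mul, mul_one, sub_eq_zero] at h
    field_simp at h ⊢
    linarith
  -- the projector onto the (-lam)-eigenspace
  set Pm : Matrix (Fin N) (Fin N) ℝ := D⁻¹ • B with hPm
  have hPm2 : Pm * Pm = Pm := by
    rw [hPm, Matrix.smul_mul, Matrix.mul_smul, hB2, smul_smul, smul_smul]
    congr 1
    field_simp
  have hPmsym : Pmᵀ = Pm := by rw [hPm, Matrix.transpose_smul, hBsym]
  have hPms : ∀ i j, Pm j i = Pm i j := by
    intro i j
    conv_lhs => rw [← hPmsym]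
    rfl
  have htrPm : Pm.trace = 1 := by
    rw [hPm, Matrix.trace_smul, htrB, smul_eq_mul, inv_mul_cancel₀ hDne]
  have hself : ∀ i j, Pm i j = ∑ x, Pm i x * Pm j x := by
    intro i j
    conv_lhs => rw [← hPm2]
    rw [Matrix.mul_apply]
    exact Finset.sum_congr rfl fun x _ => by rw [hPms x j]
  have hdiag : ∀ i, 0 ≤ Pm i i := by
    intro i
    rw [hself i i]
    refine Finset.sum_nonneg fun x _ => by nlinarith [sq_nonneg (Pm i x)]
  have hab : Pm i0 i0 + Pm iN iN ≤ 1 := by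
    have hsub : ({i0, iN} : Finset (Fin N)) ⊆ Finset.univ := Finset.subset_univ _
    have hsum := Finset.sum_le_sum_of_subset_of_nonneg hsub
      (fun i _ _ => hdiag i)
    rw [Finset.sum_pair hi0N] at hsum
    calc Pm i0 i0 + Pm iN iN ≤ ∑ i, Pm i i := hsum
      _ = Pm.trace := rfl
      _ = 1 := htrPm
  have hCS : (Pm i0 iN)^2 ≤ (Pm i0 i0) * (Pm iN iN) := by
    have h := Finset.sum_mul_sq_le_sq_mul_sq Finset.univ (fun x => Pm i0 x) (fun x => Pm iN x)
    rw [hself i0 iN, hself i0 i0, hself iN iN]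
    calc (∑ x, Pm i0 x * Pm iN x)^2 ≤ (∑ x, (Pm i0 x)^2) * (∑ x, (Pm iN x)^2) := h
      _ = (∑ x, Pm i0 x * Pm i0 x) * (∑ x, Pm iN x * Pm iN x) := by
          simp_rw [sq]
  have hcorner2 : (Pm i0 iN)^2 ≤ 1/4 :=
    proj_corner_bound _ _ _ hCS (hdiag i0) (hdiag iN) hab
  -- compute the corner entry
  have hPmc : Pm i0 iN = D⁻¹ * PJ := by
    rw [hPm, Matrix.smul_apply, hBc, smul_eq_mul]
  -- relate D and D0
  have hs0' : s0 = Finset.Ico 1 N := by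
    rw [hs0]
    ext k
    simp [Finset.mem_erase, Finset.mem_range, Finset.mem_Ico]
    omega
  have hs1' : s1 = insert 0 (Finset.Ico 2 N) := by
    rw [hs1]
    ext k
    simp [Finset.mem_erase, Finset.mem_range, Finset.mem_Ico, Finset.mem_insert]
    omega
  set T : ℝ := ∏ i ∈ Finset.range (N-2), (((1+i:ℕ):ℝ) * lam) with hT
  have hD0T : D0 = ((N:ℝ)-1) * lam * T := by
    rw [hD0, hs0', Finset.prod_Ico_eq_prod_range]
    have hr : N - 1 = (N - 2) + 1 := by omega
    rw [hr, Finset.prod_range_succ, hT]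
    have : ((1+(N-2):ℕ):ℝ) = (N:ℝ) - 1 := by
      have : (1+(N-2)) = N - 1 := by omega
      rw [this, Nat.cast_sub (by omega)]
      norm_num
    rw [this]
    ring
  have hDT : D = -lam * T := by
    rw [hD, hs1', Finset.prod_insert (by simp), Finset.prod_Ico_eq_prod_range, hT]
    have : ∀ i ∈ Finset.range (N-2), ((2+i:ℕ):ℝ) * lam - lam = ((1+i:ℕ):ℝ) * lam := by
      intro i _
      push_cast
      ring
    rw [Finset.prod_congr rfl this]
    push_cast
    ring
  have hcornerval : Pm i0 iN = -(((N:ℝ)-1)/(N:ℝ)) := by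
    rw [hPmc, hPJval, hD0T, hDT]
    have hTne : T ≠ 0 := by
      rw [hT]
      refine Finset.prod_ne_zero_iff.mpr fun i _ => ?_
      positivity
    field_simp
  have hNge : (3:ℝ) ≤ (N:ℝ) := by exact_mod_cast hN
  rw [hcornerval] at hcorner2
  exact final_ineq (N:ℝ) hNge hcorner2
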